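/- For each integer n ≥ 1, let W_n be a random variable on {0, 1, …, n} with P(W_n = k) = c_n · k · C(2n, n−k), where c_n = 2/(n·C(2n, n)). Fix s ≥ 0 and let k_n = ⌊√(s n)⌋. Then the conditional law of W_n²/n given the event {W_n ≥ k_n} converges weakly, as n → ∞, to the law of s + X where X is exponential with rate 1 (equivalently, to the law of an Exp(1) variable conditioned to be at least s). -/

import Mathlib

set_option maxHeartbeats 1000000

open MeasureTheory ProbabilityTheory Topology Filter

/-- `P(W_n = k) = c_n · k · C(2n, n-k)` with `c_n = 2/(n·C(2n,n))`. -/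
noncomputable def pW (n k : ℕ) : ℝ :=
  2 / ((n : ℝ) * (Nat.choose (2 * n) n : ℝ)) * (k : ℝ) * (Nat.choose (2 * n) (n - k) : ℝ)

section Aux
open Real Set
open scoped NNReal ENNReal

namespace Stmt13Aux

noncomputable def ratio (n k : ℕ) : ℝ :=
  (Nat.choose (2 * n) (n - k) : ℝ) / (Nat.choose (2 * n) n : ℝ)

lemma ratio_pos {n k : ℕ} : 0 < ratio n k := by
  apply div_pos <;> exact_mod_cast Nat.choose_pos (by omega)

lemma ratio_zero (n : ℕ) : ratio n 0 = 1 := by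
  have h : (0:ℝ) < (Nat.choose (2*n) n : ℝ) := by exact_mod_cast Nat.choose_pos (by omega)
  simp [ratio, div_self h.ne']

lemma choose_step {n k : ℕ} (hk : k < n) :
    ((Nat.choose (2*n) (n-(k+1))) : ℝ) * ((n:ℝ) + k + 1)
      = (Nat.choose (2*n) (n-k) : ℝ) * ((n:ℝ) - k) := by
  have h := Nat.choose_succ_right_eq (2*n) (n-k-1)
  have h1 : n - k - 1 + 1 = n - k := by omega
  have h2 : 2*n - (n-k-1) = n + k + 1 := by omega
  rw [h1, h2] at h
  have h3 : n - (k+1) = n - k - 1 := by omega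
  rw [h3]
  have hcast : ((n - k : ℕ) : ℝ) = (n:ℝ) - k := by
    have : k ≤ n := hk.le; push_cast [this]; ring
  have := congrArg (fun m : ℕ => (m : ℝ)) h
  push_cast at this
  rw [hcast] at this
  linarith [this]

lemma ratio_succ {n k : ℕ} (hk : k < n) :
    ratio n (k+1) = ratio n k * (((n:ℝ) - k) / ((n:ℝ) + k + 1)) := by
  have hC : (0:ℝ) < (Nat.choose (2*n) n : ℝ) := by exact_mod_cast Nat.choose_pos (by omega)
  have hd : (0:ℝ) < (n:ℝ) + k + 1 := by positivity
  have h := choose_step hk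
  unfold ratio
  field_simp
  linear_combination h

lemma ratio_le {n : ℕ} : ∀ {k : ℕ}, k ≤ n → ratio n k ≤ Real.exp (-((k:ℝ)^2 / ((n:ℝ) + k))) := by
  intro k
  induction k with
  | zero => intro _; simp [ratio_zero]
  | succ k ih =>
    intro hk1
    have hk : k < n := hk1
    have hn' : 0 < n := by omega
    have hn : (0:ℝ) < n := by exact_mod_cast hn'
    have hd1 : (0:ℝ) < (n:ℝ) + k := by positivity
    have hd2 : (0:ℝ) < (n:ℝ) + k + 1 := by positivity
    rw [ratio_succ hk]
    have h1 : ratio n k ≤ Real.exp (-((k:ℝ)^2 / ((n:ℝ) + k))) := ih hk.le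
    have h2 : ((n:ℝ) - k) / ((n:ℝ) + k + 1) ≤ Real.exp (-((2*(k:ℝ)+1) / ((n:ℝ) + k + 1))) := by
      have := Real.add_one_le_exp (-((2*(k:ℝ)+1) / ((n:ℝ) + k + 1)))
      have heq : ((n:ℝ) - k) / ((n:ℝ) + k + 1) = -((2*(k:ℝ)+1) / ((n:ℝ) + k + 1)) + 1 := by
        field_simp
        ring
      rw [heq]; exact this
    have h3 : ratio n k * (((n:ℝ) - k) / ((n:ℝ) + k + 1))
        ≤ Real.exp (-((k:ℝ)^2 / ((n:ℝ) + k))) * Real.exp (-((2*(k:ℝ)+1) / ((n:ℝ) + k + 1))) := by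
      apply mul_le_mul h1 h2 _ (Real.exp_nonneg _)
      apply div_nonneg _ hd2.le
      have : (k:ℝ) ≤ n := by exact_mod_cast hk.le
      linarith
    refine h3.trans ?_
    rw [← Real.exp_add, Real.exp_le_exp]
    have hle : ((k:ℝ)+1)^2 / ((n:ℝ) + k + 1)
        ≤ (k:ℝ)^2 / ((n:ℝ) + k) + (2*(k:ℝ)+1) / ((n:ℝ) + k + 1) := by
      have hkk : (k:ℝ)^2 / ((n:ℝ) + k + 1) ≤ (k:ℝ)^2 / ((n:ℝ) + k) := by
        apply div_le_div_of_nonneg_left (by positivity) hd1; linarith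
      have : ((k:ℝ)+1)^2 / ((n:ℝ) + k + 1)
          = (k:ℝ)^2 / ((n:ℝ) + k + 1) + (2*(k:ℝ)+1) / ((n:ℝ) + k + 1) := by
        field_simp; ring
      linarith
    push_cast
    have h4 : ((n:ℝ) + ((k:ℝ) + 1)) = (n:ℝ) + (k:ℝ) + 1 := by ring
    rw [h4]
    linarith

lemma le_ratio {n : ℕ} : ∀ {k : ℕ}, k ≤ n →
    Real.exp (-((k:ℝ)^2 / ((n:ℝ) + 1 - k))) ≤ ratio n k := by
  intro k
  induction k with
  | zero => intro _; simp [ratio_zero]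
  | succ k ih =>
    intro hk1
    have hk : k < n := hk1
    have hn' : 0 < n := by omega
    have hn : (0:ℝ) < n := by exact_mod_cast hn'
    have hkn : (k:ℝ) < n := by exact_mod_cast hk
    have hd1 : (0:ℝ) < (n:ℝ) - k := by linarith
    have hd2 : (0:ℝ) < (n:ℝ) + k + 1 := by positivity
    rw [ratio_succ hk]
    have h2 : Real.exp (-((2*(k:ℝ)+1) / ((n:ℝ) - k))) ≤ ((n:ℝ) - k) / ((n:ℝ) + k + 1) := by
      have hq : (0:ℝ) < ((n:ℝ) - k) / ((n:ℝ) + k + 1) := div_pos hd1 hd2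
      rw [Real.exp_neg, inv_le_comm₀ (Real.exp_pos _) hq, inv_div]
      calc ((n:ℝ) + k + 1) / ((n:ℝ) - k) = 1 + (2*(k:ℝ)+1) / ((n:ℝ) - k) := by field_simp; ring
      _ ≤ Real.exp ((2*(k:ℝ)+1) / ((n:ℝ) - k)) := by
          have := Real.add_one_le_exp ((2*(k:ℝ)+1) / ((n:ℝ) - k)); linarith
    have h1 : Real.exp (-((k:ℝ)^2 / ((n:ℝ) + 1 - k))) ≤ ratio n k := ih hk.le
    have key : Real.exp (-(((k:ℝ)+1)^2 / ((n:ℝ) - k)))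
        ≤ Real.exp (-((k:ℝ)^2 / ((n:ℝ) + 1 - k))) * Real.exp (-((2*(k:ℝ)+1) / ((n:ℝ) - k))) := by
      rw [← Real.exp_add, Real.exp_le_exp]
      have hkk : (k:ℝ)^2 / ((n:ℝ) + 1 - k) ≤ (k:ℝ)^2 / ((n:ℝ) - k) := by
        apply div_le_div_of_nonneg_left (by positivity) hd1; linarith
      have : ((k:ℝ)+1)^2 / ((n:ℝ) - k)
          = (k:ℝ)^2 / ((n:ℝ) - k) + (2*(k:ℝ)+1) / ((n:ℝ) - k) := by
        field_simp; ring
      linarith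
    have hfin : Real.exp (-((k:ℝ)^2 / ((n:ℝ) + 1 - k))) * Real.exp (-((2*(k:ℝ)+1) / ((n:ℝ) - k)))
        ≤ ratio n k * (((n:ℝ) - k) / ((n:ℝ) + k + 1)) :=
      mul_le_mul h1 h2 (Real.exp_nonneg _) ratio_pos.le
    have hcast : ((n:ℝ) + 1 - ((k:ℕ)+1:ℕ)) = (n:ℝ) - k := by push_cast; ring
    calc Real.exp (-((((k:ℕ)+1:ℕ):ℝ)^2 / ((n:ℝ) + 1 - (((k:ℕ)+1:ℕ):ℝ))))
        = Real.exp (-(((k:ℝ)+1)^2 / ((n:ℝ) - k))) := by push_cast; ring_nf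
      _ ≤ _ := key.trans hfin




lemma real_sqrt_atTop : Tendsto Real.sqrt atTop atTop := by
  rw [tendsto_atTop_atTop]
  intro b
  refine ⟨(max b 0)^2, fun a ha => ?_⟩
  calc b ≤ max b 0 := le_max_left _ _
    _ = Real.sqrt ((max b 0)^2) := (Real.sqrt_sq (le_max_right _ _)).symm
    _ ≤ Real.sqrt a := Real.sqrt_le_sqrt ha

lemma invsqrt_tendsto : Tendsto (fun n : ℕ => 1 / Real.sqrt n) atTop (𝓝 0) :=
  Tendsto.div_atTop tendsto_const_nhds (real_sqrt_atTop.comp tendsto_natCast_atTop_atTop)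

lemma sqrtXn_atTop {x : ℝ} (hx : 0 < x) :
    Tendsto (fun n : ℕ => Real.sqrt (x * n)) atTop atTop :=
  real_sqrt_atTop.comp (Tendsto.const_mul_atTop hx tendsto_natCast_atTop_atTop)

lemma K_top {x : ℝ} (hx : 0 < x) :
    Tendsto (fun n : ℕ => ⌊Real.sqrt (x * n)⌋₊) atTop atTop :=
  tendsto_nat_floor_atTop.comp (sqrtXn_atTop hx)

lemma K_le_n {x : ℝ} (hx : 0 < x) :
    ∀ᶠ n : ℕ in atTop, ⌊Real.sqrt (x * n)⌋₊ ≤ n := by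
  filter_upwards [eventually_ge_atTop ⌈x⌉₊] with n hn
  have hxn : x ≤ (n:ℝ) := le_trans (Nat.le_ceil x) (by exact_mod_cast hn)
  have h : Real.sqrt (x * n) ≤ (n:ℝ) := by
    calc Real.sqrt (x * n) ≤ Real.sqrt ((n:ℝ) * n) :=
          Real.sqrt_le_sqrt (by nlinarith [Nat.cast_nonneg (α := ℝ) n])
      _ = (n:ℝ) := Real.sqrt_mul_self (Nat.cast_nonneg n)
  calc ⌊Real.sqrt (x * n)⌋₊ ≤ ⌊(n:ℝ)⌋₊ := Nat.floor_mono h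
    _ = n := Nat.floor_natCast n

lemma Ksq_div_tendsto {x : ℝ} (hx : 0 < x) :
    Tendsto (fun n : ℕ => ((⌊Real.sqrt (x * n)⌋₊ : ℝ))^2 / n) atTop (𝓝 x) := by
  have hlow : Tendsto (fun n : ℕ => x - 2 * Real.sqrt x * (1 / Real.sqrt n)) atTop (𝓝 x) := by
    have h := (tendsto_const_nhds (x := (2 * Real.sqrt x : ℝ)) (f := atTop (α := ℕ))).mul
      invsqrt_tendsto
    have := (tendsto_const_nhds (x := x) (f := atTop (α := ℕ))).sub h
    simpa using this
  apply tendsto_of_tendsto_of_tendsto_of_le_of_le' hlow tendsto_const_nhds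
  · -- lower bound eventually
    filter_upwards [eventually_ge_atTop 1, (sqrtXn_atTop hx).eventually_ge_atTop 1] with n hn h1
    set u := Real.sqrt (n:ℝ) with hu
    set s := Real.sqrt x with hs
    set K := ((⌊Real.sqrt (x * n)⌋₊ : ℕ) : ℝ) with hK
    have hn0 : (0:ℝ) < n := by exact_mod_cast hn
    have hu0 : 0 < u := Real.sqrt_pos.mpr hn0
    have hu2 : u^2 = n := Real.sq_sqrt hn0.le
    have hs2 : s^2 = x := Real.sq_sqrt hx.le
    have hsu : Real.sqrt (x * n) = s * u := Real.sqrt_mul hx.le _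
    have h1' : 1 ≤ s * u := by rw [← hsu]; exact h1
    have hK2 : K ≤ s * u := by rw [← hsu]; exact Nat.floor_le (Real.sqrt_nonneg _)
    have hK1 : s * u - 1 ≤ K := by
      have hlt : s * u < K + 1 := by rw [← hsu]; exact Nat.lt_floor_add_one _
      linarith
    have hK0 : (0:ℝ) ≤ K := Nat.cast_nonneg _
    have hKsq : (s * u - 1)^2 ≤ K^2 := by nlinarith
    rw [le_div_iff₀ hn0]
    have hterm : (1 / u) * (n:ℝ) = u := by
      rw [← hu2]; field_simp
    have hxn : x * (n:ℝ) = (s * u)^2 := by rw [← hs2, ← hu2]; ring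
    nlinarith [hKsq, hxn, hterm]
  · -- upper bound
    filter_upwards [eventually_ge_atTop 1] with n hn
    have hn0 : (0:ℝ) < n := by exact_mod_cast hn
    rw [div_le_iff₀ hn0]
    have hK2 : ((⌊Real.sqrt (x * n)⌋₊ : ℕ) : ℝ) ≤ Real.sqrt (x * n) :=
      Nat.floor_le (Real.sqrt_nonneg _)
    have := Real.sq_sqrt (by positivity : (0:ℝ) ≤ x * n)
    nlinarith [Real.sqrt_nonneg (x * n)]

lemma K_div_tendsto {x : ℝ} (hx : 0 < x) :
    Tendsto (fun n : ℕ => ((⌊Real.sqrt (x * n)⌋₊ : ℝ)) / n) atTop (𝓝 0) := by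
  have hupper : Tendsto (fun n : ℕ => Real.sqrt x * (1 / Real.sqrt n)) atTop (𝓝 0) := by
    simpa using (tendsto_const_nhds (x := (Real.sqrt x : ℝ)) (f := atTop (α := ℕ))).mul
      invsqrt_tendsto
  apply tendsto_of_tendsto_of_tendsto_of_le_of_le' tendsto_const_nhds hupper
  · filter_upwards with n; positivity
  · filter_upwards [eventually_ge_atTop 1] with n hn
    have hn0 : (0:ℝ) < n := by exact_mod_cast hn
    have hu0 : 0 < Real.sqrt (n:ℝ) := Real.sqrt_pos.mpr hn0
    have hu2 : (Real.sqrt (n:ℝ))^2 = n := Real.sq_sqrt hn0.le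
    have hsu : Real.sqrt (x * n) = Real.sqrt x * Real.sqrt n := Real.sqrt_mul hx.le _
    have hK2 : ((⌊Real.sqrt (x * n)⌋₊ : ℕ) : ℝ) ≤ Real.sqrt x * Real.sqrt n := by
      rw [← hsu]; exact Nat.floor_le (Real.sqrt_nonneg _)
    rw [div_le_iff₀ hn0]
    calc ((⌊Real.sqrt (x * n)⌋₊ : ℕ) : ℝ) ≤ Real.sqrt x * Real.sqrt n := hK2
      _ = Real.sqrt x * (1 / Real.sqrt n) * n := by
          rw [mul_one_div, div_mul_eq_mul_div, eq_div_iff hu0.ne', mul_assoc, ← sq, hu2]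
  
lemma ratio_tendsto {x : ℝ} (hx : 0 < x) :
    Tendsto (fun n : ℕ => ratio n ⌊Real.sqrt (x * n)⌋₊) atTop (𝓝 (Real.exp (-x))) := by
  have ha := Ksq_div_tendsto hx
  have hb := K_div_tendsto hx
  have hinv : Tendsto (fun n : ℕ => 1 / (n:ℝ)) atTop (𝓝 0) :=
    tendsto_one_div_atTop_nhds_zero_nat
  have he1 : Tendsto (fun n : ℕ => ((⌊Real.sqrt (x * n)⌋₊ : ℝ))^2 / n
      / (1 + ((⌊Real.sqrt (x * n)⌋₊ : ℝ)) / n)) atTop (𝓝 x) := by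
    have hden : Tendsto (fun n : ℕ => 1 + ((⌊Real.sqrt (x * n)⌋₊ : ℝ)) / n) atTop (𝓝 1) := by
      simpa using (tendsto_const_nhds (x := (1:ℝ)) (f := atTop (α := ℕ))).add hb
    simpa only [div_one, Pi.div_def] using ha.div hden one_ne_zero
  have he2 : Tendsto (fun n : ℕ => ((⌊Real.sqrt (x * n)⌋₊ : ℝ))^2 / n
      / (1 + 1 / (n:ℝ) - ((⌊Real.sqrt (x * n)⌋₊ : ℝ)) / n)) atTop (𝓝 x) := by
    have hden : Tendsto (fun n : ℕ => 1 + 1 / (n:ℝ) - ((⌊Real.sqrt (x * n)⌋₊ : ℝ)) / n)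
        atTop (𝓝 1) := by
      have := ((tendsto_const_nhds (x := (1:ℝ)) (f := atTop (α := ℕ))).add hinv).sub hb
      simpa using this
    simpa only [div_one, Pi.div_def] using ha.div hden one_ne_zero
  have hexp2 := (Real.continuous_exp.tendsto (-x)).comp he2.neg
  have hexp1 := (Real.continuous_exp.tendsto (-x)).comp he1.neg
  apply tendsto_of_tendsto_of_tendsto_of_le_of_le' hexp2 hexp1
  · -- lower
    filter_upwards [eventually_ge_atTop 1, K_le_n hx] with n hn hKn
    simp only [Function.comp_apply]
    set k := ⌊Real.sqrt (x * n)⌋₊ with hk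
    have hn0 : (0:ℝ) < n := by exact_mod_cast hn
    have heq : (k:ℝ)^2 / n / (1 + 1 / (n:ℝ) - (k:ℝ) / n) = (k:ℝ)^2 / ((n:ℝ) + 1 - k) := by
      rw [div_div]
      congr 1
      field_simp
    rw [heq]
    exact le_ratio hKn
  · -- upper
    filter_upwards [eventually_ge_atTop 1, K_le_n hx] with n hn hKn
    simp only [Function.comp_apply]
    set k := ⌊Real.sqrt (x * n)⌋₊ with hk
    have hn0 : (0:ℝ) < n := by exact_mod_cast hn
    have heq : (k:ℝ)^2 / n / (1 + (k:ℝ) / n) = (k:ℝ)^2 / ((n:ℝ) + k) := by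
      rw [div_div]
      congr 1
      field_simp
    rw [heq]
    exact ratio_le hKn




/-- The step function whose integral is the sum. -/
noncomputable def g (s : ℝ) (f : BoundedContinuousFunction ℝ ℝ) (n : ℕ) (x : ℝ) : ℝ :=
  ∑ k ∈ Finset.Icc ⌊Real.sqrt (s * n)⌋₊ n,
    Set.indicator (Set.Ico ((k:ℝ)^2 / n) (((k:ℝ)+1)^2 / n))
      (fun _ => pW n k * f ((k:ℝ)^2 / n) * ((n:ℝ) / (2*k+1))) x

lemma g_meas (s : ℝ) (f : BoundedContinuousFunction ℝ ℝ) (n : ℕ) :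
    AEStronglyMeasurable (g s f n) volume := by
  apply Measurable.aestronglyMeasurable
  apply Finset.measurable_sum
  intro k _
  exact Measurable.indicator measurable_const measurableSet_Ico

lemma integral_g (s : ℝ) (f : BoundedContinuousFunction ℝ ℝ) {n : ℕ} (hn : 1 ≤ n) :
    ∫ x, g s f n x = ∑ k ∈ Finset.Icc ⌊Real.sqrt (s * n)⌋₊ n, pW n k * f ((k:ℝ)^2 / n) := by
  have hn0 : (0:ℝ) < n := by exact_mod_cast hn
  unfold g
  rw [integral_finset_sum]
  · apply Finset.sum_congr rfl
    intro k _
    rw [integral_indicator measurableSet_Ico, setIntegral_const]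
    rw [measureReal_def, Real.volume_Ico]
    have hlen : ((k:ℝ)+1)^2 / n - (k:ℝ)^2 / n = (2*(k:ℝ)+1) / n := by
      field_simp; ring
    rw [hlen, ENNReal.toReal_ofReal (by positivity)]
    rw [smul_eq_mul]
    have h2k : (0:ℝ) < 2*(k:ℝ)+1 := by positivity
    field_simp
  · intro k _
    rw [integrable_indicator_iff measurableSet_Ico]
    exact integrableOn_const measure_Ico_lt_top.ne

lemma mem_Ico_imp_floor {n : ℕ} {x : ℝ} {k : ℕ}
    (hx : x ∈ Set.Ico ((k:ℝ)^2 / n) (((k:ℝ)+1)^2 / n)) (hn : 1 ≤ n) :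
    k = ⌊Real.sqrt (x * n)⌋₊ := by
  have hn0 : (0:ℝ) < n := by exact_mod_cast hn
  obtain ⟨h1, h2⟩ := hx
  have hx0 : 0 ≤ x := le_trans (by positivity) h1
  have hk2 : (k:ℝ)^2 ≤ x * n := by
    rw [div_le_iff₀ hn0] at h1; linarith
  have hk2' : x * n < ((k:ℝ)+1)^2 := by
    rw [lt_div_iff₀ hn0] at h2; linarith
  have hks : (k:ℝ) ≤ Real.sqrt (x * n) := by
    rw [show (k:ℝ) = Real.sqrt ((k:ℝ)^2) from (Real.sqrt_sq (Nat.cast_nonneg k)).symm]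
    exact Real.sqrt_le_sqrt hk2
  have hks' : Real.sqrt (x * n) < (k:ℝ) + 1 := by
    have := Real.sqrt_lt_sqrt (by positivity) hk2'
    rwa [Real.sqrt_sq (by positivity)] at this
  symm
  rw [Nat.floor_eq_iff (Real.sqrt_nonneg _)]
  constructor
  · exact_mod_cast hks
  · exact_mod_cast hks'

lemma g_eval_single {s : ℝ} {f : BoundedContinuousFunction ℝ ℝ} {n k : ℕ} {x : ℝ}
    (hn : 1 ≤ n) (hk : k ∈ Finset.Icc ⌊Real.sqrt (s * n)⌋₊ n)
    (hx : x ∈ Set.Ico ((k:ℝ)^2 / n) (((k:ℝ)+1)^2 / n)) :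
    g s f n x = pW n k * f ((k:ℝ)^2 / n) * ((n:ℝ) / (2*k+1)) := by
  unfold g
  rw [Finset.sum_eq_single_of_mem k hk]
  · rw [Set.indicator_of_mem hx]
  · intro j _ hj
    apply Set.indicator_of_notMem
    intro hxj
    exact hj ((mem_Ico_imp_floor hxj hn).trans (mem_Ico_imp_floor hx hn).symm)

lemma pW_eq {n k : ℕ} (hn : 1 ≤ n) :
    pW n k * ((n:ℝ) / (2*k+1)) = (2*(k:ℝ) / (2*(k:ℝ)+1)) * ratio n k := by
  have hn0 : (0:ℝ) < n := by exact_mod_cast hn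
  have hC : (0:ℝ) < (Nat.choose (2*n) n : ℝ) := by
    exact_mod_cast Nat.choose_pos (by omega)
  unfold pW ratio
  field_simp

/-- Dominating function. -/
noncomputable def B (f : BoundedContinuousFunction ℝ ℝ) (x : ℝ) : ℝ :=
  ‖f‖ * Set.indicator (Set.Ici (0:ℝ)) (fun y => Real.exp (Real.sqrt y - y/2)) x

lemma B_nonneg (f : BoundedContinuousFunction ℝ ℝ) (x : ℝ) : 0 ≤ B f x := by
  unfold B
  apply mul_nonneg (norm_nonneg _)
  apply Set.indicator_nonneg
  intro y _
  positivity

lemma B_integrable (f : BoundedContinuousFunction ℝ ℝ) : Integrable (B f) := by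
  apply Integrable.const_mul
  rw [integrable_indicator_iff measurableSet_Ici, integrableOn_Ici_iff_integrableOn_Ioi]
  apply Integrable.mono' (g := fun y => Real.exp 1 * Real.exp (-(1/4 : ℝ) * y))
  · exact (exp_neg_integrableOn_Ioi 0 (by norm_num)).const_mul _
  · exact ((Real.continuous_sqrt.sub (continuous_id.div_const 2)).rexp).aestronglyMeasurable
  · rw [ae_restrict_iff' measurableSet_Ioi]
    apply ae_of_all
    intro y hy
    have hy0 : (0:ℝ) ≤ y := (le_of_lt hy)
    rw [Real.norm_eq_abs, abs_of_nonneg (Real.exp_nonneg _)]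
    rw [← Real.exp_add]
    apply Real.exp_le_exp.2
    have hsq : Real.sqrt y ≤ y/4 + 1 := by
      nlinarith [Real.sq_sqrt hy0, Real.sqrt_nonneg y, sq_nonneg (Real.sqrt y - 2)]
    linarith

lemma g_abs_le (s : ℝ) (f : BoundedContinuousFunction ℝ ℝ) (n : ℕ) (x : ℝ) :
    |g s f n x| ≤ B f x := by
  by_cases hex : ∃ k ∈ Finset.Icc ⌊Real.sqrt (s * n)⌋₊ n,
      x ∈ Set.Ico ((k:ℝ)^2 / n) (((k:ℝ)+1)^2 / n)
  · obtain ⟨k, hk, hxk⟩ := hex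
    have hn : 1 ≤ n := by
      by_contra h
      have hn0 : n = 0 := by omega
      subst hn0
      obtain ⟨h1, h2⟩ := hxk
      simp at h1 h2
      linarith
    have hn0 : (0:ℝ) < n := by exact_mod_cast hn
    have hkn : k ≤ n := (Finset.mem_Icc.1 hk).2
    rw [g_eval_single hn hk hxk]
    have hx0 : 0 ≤ x := le_trans (by positivity) hxk.1
    have hBx : B f x = ‖f‖ * Real.exp (Real.sqrt x - x/2) := by
      unfold B
      rw [Set.indicator_of_mem (Set.mem_Ici.2 hx0)]
    rw [hBx]
    rcases Nat.eq_zero_or_pos k with hk0 | hk1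
    · subst hk0
      simp [pW]
      positivity
    · -- k ≥ 1
      have hk1' : (1:ℝ) ≤ (k:ℝ) := by exact_mod_cast hk1
      have h2k : (0:ℝ) < 2*(k:ℝ)+1 := by positivity
      have hre : pW n k * f ((k:ℝ)^2/n) * ((n:ℝ)/(2*k+1))
          = ((2*(k:ℝ)/(2*(k:ℝ)+1)) * ratio n k) * f ((k:ℝ)^2/n) := by
        rw [show pW n k * f ((k:ℝ)^2/n) * ((n:ℝ)/(2*k+1))
            = (pW n k * ((n:ℝ)/(2*k+1))) * f ((k:ℝ)^2/n) by ring, pW_eq hn]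
      rw [hre, abs_mul]
      have hfle : |f ((k:ℝ)^2/n)| ≤ ‖f‖ := by
        rw [← Real.norm_eq_abs]
        exact BoundedContinuousFunction.norm_coe_le_norm f _
      have hr1 : |(2*(k:ℝ)/(2*(k:ℝ)+1)) * ratio n k| ≤ ratio n k := by
        rw [abs_of_nonneg (mul_nonneg (by positivity) ratio_pos.le)]
        have : 2*(k:ℝ)/(2*(k:ℝ)+1) ≤ 1 := by
          rw [div_le_one h2k]; linarith
        nlinarith [ratio_pos (n := n) (k := k)]
      have hrexp : ratio n k ≤ Real.exp (Real.sqrt x - x/2) := by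
        refine (ratio_le hkn).trans ?_
        apply Real.exp_le_exp.2
        -- need  -(k^2/(n+k)) ≤ √x - x/2
        have hkn' : (k:ℝ) ≤ n := by exact_mod_cast hkn
        have hd : (0:ℝ) < (n:ℝ) + k := by positivity
        have hstep : (k:ℝ)^2 / (2*(n:ℝ)) ≤ (k:ℝ)^2 / ((n:ℝ) + k) := by
          apply div_le_div_of_nonneg_left (by positivity) hd
          linarith
        have hkey : x - 2*Real.sqrt x ≤ (k:ℝ)^2 / n := by
          have hx2 : x * n < ((k:ℝ)+1)^2 := by
            have := hxk.2
            rw [lt_div_iff₀ hn0] at this; linarith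
          have hsx : 0 ≤ Real.sqrt x := Real.sqrt_nonneg x
          rcases le_or_gt (Real.sqrt (x*n)) 1 with hc | hc
          · have h11 : Real.sqrt (x*n) * Real.sqrt (x*n) ≤ 1 := by
              nlinarith [hc, Real.sqrt_nonneg (x*(n:ℝ))]
            have hxn1 : x * n ≤ 1 := by
              nlinarith [Real.sq_sqrt (by positivity : (0:ℝ) ≤ x*n)]
            have hxle : x ≤ 1/n := by
              rw [le_div_iff₀ hn0]; linarith
            have hk2 : (1:ℝ) ≤ (k:ℝ)^2 := by nlinarith
            have : (1:ℝ)/n ≤ (k:ℝ)^2/n := by gcongr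
            nlinarith
          · have hklb : Real.sqrt (x*n) - 1 ≤ (k:ℝ) := by
              have : Real.sqrt (x*n) < (k:ℝ) + 1 := by
                have h := Real.sqrt_lt_sqrt (by positivity) hx2
                rwa [Real.sqrt_sq (by positivity)] at h
              linarith
            have hklb2 : (Real.sqrt (x*n) - 1)^2 ≤ (k:ℝ)^2 := by
              nlinarith [hklb, hc]
            have hsq : (Real.sqrt (x*n))^2 = x*n := Real.sq_sqrt (by positivity)
            have hsmul : Real.sqrt (x*n) = Real.sqrt x * Real.sqrt n :=
              Real.sqrt_mul hx0 _
            have hsn : Real.sqrt (n:ℝ) ≤ (n:ℝ) := by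
              have h1 : (1:ℝ) ≤ Real.sqrt n := by
                rw [show (1:ℝ) = Real.sqrt 1 from (Real.sqrt_one).symm]
                apply Real.sqrt_le_sqrt; exact_mod_cast hn
              nlinarith [Real.sq_sqrt (le_of_lt hn0)]
            have hsxn : Real.sqrt (x*n) ≤ Real.sqrt x * n := by
              rw [hsmul]; nlinarith
            rw [le_div_iff₀ hn0]
            have e1 : x*n - 2*(Real.sqrt x * (n:ℝ)) + 1 ≤ (k:ℝ)^2 := by
              nlinarith [hklb2, hsq, hsxn]
            linarith
        have heq2 : (k:ℝ)^2/(2*(n:ℝ)) = ((k:ℝ)^2/(n:ℝ))/2 := by ring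
        linarith
      calc |(2*(k:ℝ)/(2*(k:ℝ)+1)) * ratio n k| * |f ((k:ℝ)^2/n)|
          ≤ ratio n k * ‖f‖ := by
            apply mul_le_mul hr1 hfle (abs_nonneg _) ratio_pos.le
        _ ≤ Real.exp (Real.sqrt x - x/2) * ‖f‖ := by
            apply mul_le_mul_of_nonneg_right hrexp (norm_nonneg _)
        _ = ‖f‖ * Real.exp (Real.sqrt x - x/2) := by ring
  · unfold g
    rw [Finset.sum_eq_zero]
    · simpa using B_nonneg f x
    · intro k hk
      apply Set.indicator_of_notMem
      intro hxk
      exact hex ⟨k, hk, hxk⟩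

lemma two_k_tendsto : Tendsto (fun m : ℕ => 2*(m:ℝ)/(2*(m:ℝ)+1)) atTop (𝓝 1) := by
  have h2 : Tendsto (fun m : ℕ => 1/(2*(m:ℝ)+1)) atTop (𝓝 0) := by
    apply Tendsto.div_atTop tendsto_const_nhds
    apply tendsto_atTop_add_const_right
    exact Tendsto.const_mul_atTop two_pos tendsto_natCast_atTop_atTop
  have h1 : Tendsto (fun m : ℕ => 1 - 1/(2*(m:ℝ)+1)) atTop (𝓝 1) := by
    simpa using (tendsto_const_nhds (x := (1:ℝ)) (f := atTop (α := ℕ))).sub h2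
  apply h1.congr
  intro m
  have h : (0:ℝ) < 2*(m:ℝ)+1 := by positivity
  field_simp
  ring

lemma g_tendsto (s : ℝ) (hs : 0 ≤ s) (f : BoundedContinuousFunction ℝ ℝ) {x : ℝ} (hxs : x ≠ s) :
    Tendsto (fun n => g s f n x) atTop
      (𝓝 (Set.indicator (Set.Ioi s) (fun y => Real.exp (-y) * f y) x)) := by
  rcases lt_or_gt_of_ne hxs with hlt | hgt
  · have hind : Set.indicator (Set.Ioi s) (fun y => Real.exp (-y) * f y) x = 0 :=
      Set.indicator_of_notMem (by simp only [Set.mem_Ioi, not_lt]; linarith) _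
    rw [hind]
    rcases lt_or_ge x 0 with hx0 | hx0
    · refine Tendsto.congr' ?_ tendsto_const_nhds
      filter_upwards with n
      symm
      apply Finset.sum_eq_zero
      intro k _
      apply Set.indicator_of_notMem
      intro hxk
      have : (0:ℝ) ≤ (k:ℝ)^2 / n := by positivity
      have := hxk.1
      linarith
    · have hs0 : 0 < s := lt_of_le_of_lt hx0 hlt
      set c := (s-x)/s with hc
      have hc0 : 0 < c := div_pos (by linarith) hs0
      refine Tendsto.congr' ?_ tendsto_const_nhds
      filter_upwards [eventually_ge_atTop 1,
        (sqrtXn_atTop hs0).eventually_ge_atTop (max 1 (2/c))] with n hn hsn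
      have hn0 : (0:ℝ) < n := by exact_mod_cast hn
      have hsn1 : (1:ℝ) ≤ Real.sqrt (s*n) := le_trans (le_max_left _ _) hsn
      have hsn2 : 2/c ≤ Real.sqrt (s*n) := le_trans (le_max_right _ _) hsn
      symm
      apply Finset.sum_eq_zero
      intro k hk
      apply Set.indicator_of_notMem
      intro hxk
      -- derive contradiction
      have hklow : Real.sqrt (s*n) - 1 ≤ ((⌊Real.sqrt (s*n)⌋₊ : ℕ) : ℝ) := by
        have := Nat.lt_floor_add_one (Real.sqrt (s*n))
        linarith
      have hkk : ((⌊Real.sqrt (s*n)⌋₊ : ℕ) : ℝ) ≤ (k:ℝ) := by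
        exact_mod_cast (Finset.mem_Icc.1 hk).1
      have hxn : x * n ≥ (k:ℝ)^2 := by
        have h1 := hxk.1
        rw [div_le_iff₀ hn0] at h1
        linarith
      have hsq : (Real.sqrt (s*n))^2 = s*n := Real.sq_sqrt (by positivity)
      have hk2 : (Real.sqrt (s*n) - 1)^2 ≤ (k:ℝ)^2 := by
        apply pow_le_pow_left₀ (by linarith) (by linarith)
      -- q n > 0
      have hq : (s-x)*n - 2*Real.sqrt (s*n) + 1 > 0 := by
        have hct : c * Real.sqrt (s*n) ≥ 2 := by
          rw [ge_iff_le, ← div_le_iff₀' hc0]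
          exact hsn2
        have hceq : c * (s*n) = (s-x)*n := by
          rw [hc, div_mul_eq_mul_div, div_eq_iff hs0.ne']; ring
        nlinarith [Real.sqrt_nonneg (s*n)]
      nlinarith
  · have hx0 : 0 < x := lt_of_le_of_lt hs hgt
    have hind : Set.indicator (Set.Ioi s) (fun y => Real.exp (-y) * f y) x
        = Real.exp (-x) * f x := Set.indicator_of_mem (Set.mem_Ioi.2 hgt) _
    rw [hind]
    have hlim : Tendsto (fun n : ℕ =>
        (2*((⌊Real.sqrt (x*n)⌋₊ : ℕ):ℝ)/(2*((⌊Real.sqrt (x*n)⌋₊ : ℕ):ℝ)+1))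
          * ratio n ⌊Real.sqrt (x*n)⌋₊ * f (((⌊Real.sqrt (x*n)⌋₊ : ℕ):ℝ)^2/n)) atTop
        (𝓝 (1 * Real.exp (-x) * f x)) := by
      refine Tendsto.mul (Tendsto.mul ?_ (ratio_tendsto hx0))
        ((f.continuous.tendsto x).comp (Ksq_div_tendsto hx0))
      exact two_k_tendsto.comp (K_top hx0)
    rw [one_mul] at hlim
    apply hlim.congr'
    filter_upwards [eventually_ge_atTop 1, K_le_n hx0] with n hn hKn
    have hn0 : (0:ℝ) < n := by exact_mod_cast hn
    set K := ⌊Real.sqrt (x*n)⌋₊ with hKdef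
    have hmono : ⌊Real.sqrt (s*n)⌋₊ ≤ K := by
      apply Nat.floor_mono
      apply Real.sqrt_le_sqrt
      apply mul_le_mul_of_nonneg_right hgt.le (Nat.cast_nonneg n)
    have hmem : K ∈ Finset.Icc ⌊Real.sqrt (s*n)⌋₊ n := Finset.mem_Icc.2 ⟨hmono, hKn⟩
    have hKle : ((K:ℕ):ℝ) ≤ Real.sqrt (x*n) := Nat.floor_le (Real.sqrt_nonneg _)
    have hKlt : Real.sqrt (x*n) < ((K:ℕ):ℝ) + 1 := Nat.lt_floor_add_one _
    have hsq : (Real.sqrt (x*n))^2 = x*n := Real.sq_sqrt (by positivity)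
    have hxmem : x ∈ Set.Ico (((K:ℕ):ℝ)^2/n) ((((K:ℕ):ℝ)+1)^2/n) := by
      constructor
      · rw [div_le_iff₀ hn0]
        nlinarith [Real.sqrt_nonneg (x*n)]
      · rw [lt_div_iff₀ hn0]
        nlinarith [Real.sqrt_nonneg (x*n)]
    rw [g_eval_single hn hmem hxmem]
    rw [show pW n K * f (((K:ℕ):ℝ)^2/n) * ((n:ℝ)/(2*K+1))
        = (pW n K * ((n:ℝ)/(2*K+1))) * f (((K:ℕ):ℝ)^2/n) from by ring, pW_eq hn]

lemma mainAux (s : ℝ) (hs : 0 ≤ s) (f : BoundedContinuousFunction ℝ ℝ) :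
    Tendsto (fun n : ℕ => ∑ k ∈ Finset.Icc ⌊Real.sqrt (s * n)⌋₊ n, pW n k * f ((k:ℝ)^2/n))
      atTop (𝓝 (∫ x in Set.Ioi s, Real.exp (-x) * f x)) := by
  have hDCT : Tendsto (fun n => ∫ x, g s f n x) atTop
      (𝓝 (∫ x, Set.indicator (Set.Ioi s) (fun y => Real.exp (-y) * f y) x)) := by
    apply tendsto_integral_of_dominated_convergence (B f) (g_meas s f) (B_integrable f)
    · intro n
      apply ae_of_all
      intro x
      rw [Real.norm_eq_abs]
      exact g_abs_le s f n x
    · have hae : ∀ᵐ x : ℝ, x ≠ s := by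
        rw [ae_iff]
        have h : {x : ℝ | ¬ x ≠ s} = {s} := by ext y; simp
        rw [h]
        exact measure_singleton s
      filter_upwards [hae] with x hx using g_tendsto s hs f hx
  rw [integral_indicator measurableSet_Ioi] at hDCT
  apply hDCT.congr'
  filter_upwards [eventually_ge_atTop 1] with n hn
  exact integral_g s f hn

lemma exponentialPDFReal_one (x : ℝ) :
    exponentialPDFReal 1 x = if 0 ≤ x then Real.exp (-x) else 0 := by
  unfold exponentialPDFReal gammaPDFReal
  split_ifs with h
  · simp [Real.Gamma_one]
  · rfl

lemma expMeasure_integral (s : ℝ) (f : BoundedContinuousFunction ℝ ℝ) :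
    (∫ x in Set.Ioi s, Real.exp (-x) * f x)
      = Real.exp (-s) * ∫ x, f (s + x) ∂(expMeasure 1) := by
  have hmeas : Measurable fun x => Real.toNNReal (exponentialPDFReal 1 x) :=
    (measurable_exponentialPDFReal 1).real_toNNReal
  have h0 : expMeasure 1 = volume.withDensity
      (fun x => ((Real.toNNReal (exponentialPDFReal 1 x) : ℝ≥0) : ℝ≥0∞)) := rfl
  rw [h0, integral_withDensity_eq_integral_smul hmeas]
  have h1 : (fun x : ℝ => (Real.toNNReal (exponentialPDFReal 1 x)) • f (s + x))
      = fun x : ℝ => Set.indicator (Set.Ici (0:ℝ)) (fun y => Real.exp (-y) * f (s + y)) x := by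
    funext x
    rw [NNReal.smul_def, Real.coe_toNNReal _ (exponentialPDFReal_nonneg zero_lt_one x)]
    rw [exponentialPDFReal_one]
    by_cases h : 0 ≤ x
    · rw [if_pos h, Set.indicator_of_mem (Set.mem_Ici.2 h), smul_eq_mul]
    · rw [if_neg h, Set.indicator_of_notMem (by simpa using h)]
      simp
  rw [h1]
  rw [integral_indicator measurableSet_Ici, integral_Ici_eq_integral_Ioi]
  -- now handle LHS by translation
  have h2 : (∫ x in Set.Ioi s, Real.exp (-x) * f x)
      = ∫ x : ℝ, Set.indicator (Set.Ioi s) (fun y => Real.exp (-y) * f y) x := by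
    rw [integral_indicator measurableSet_Ioi]
  rw [h2]
  have h3 : (∫ x : ℝ, Set.indicator (Set.Ioi s) (fun y => Real.exp (-y) * f y) x)
      = ∫ x : ℝ, Set.indicator (Set.Ioi s) (fun y => Real.exp (-y) * f y) (s + x) :=
    (integral_add_left_eq_self (fun y => Set.indicator (Set.Ioi s)
      (fun y => Real.exp (-y) * f y) y) s).symm
  rw [h3]
  have h4 : (fun x : ℝ => Set.indicator (Set.Ioi s) (fun y => Real.exp (-y) * f y) (s + x))
      = fun x : ℝ => Real.exp (-s) * Set.indicator (Set.Ioi (0:ℝ))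
          (fun y => Real.exp (-y) * f (s + y)) x := by
    funext x
    by_cases h : 0 < x
    · rw [Set.indicator_of_mem (by simp [Set.mem_Ioi]; linarith), 
        Set.indicator_of_mem (Set.mem_Ioi.2 h)]
      rw [neg_add, Real.exp_add]
      ring
    · rw [Set.indicator_of_notMem (by simp [Set.mem_Ioi]; linarith),
        Set.indicator_of_notMem (by simpa using h), mul_zero]
  rw [h4, integral_const_mul, integral_indicator measurableSet_Ioi]


end Stmt13Aux

end Aux

/-- Convergence (4.12)/(eqn:p1): for fixed `s ≥ 0` and `k_n = ⌊√(sn)⌋`, the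
conditional law of `W_n²/n` given `{W_n ≥ k_n}` converges weakly to the law of
`s + X`, `X ~ Exp(1)`, expressed via bounded continuous test functions. -/
theorem stmt_13 (s : ℝ) (hs : 0 ≤ s) (f : BoundedContinuousFunction ℝ ℝ) :
    Tendsto
      (fun n : ℕ =>
        (∑ k ∈ Finset.Icc ⌊Real.sqrt (s * n)⌋₊ n, pW n k * f ((k : ℝ) ^ 2 / n)) /
          (∑ k ∈ Finset.Icc ⌊Real.sqrt (s * n)⌋₊ n, pW n k))
      atTop (𝓝 (∫ x, f (s + x) ∂(expMeasure 1))) := by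
  have hnum := Stmt13Aux.mainAux s hs f
  have hden0 := Stmt13Aux.mainAux s hs (BoundedContinuousFunction.const ℝ (1:ℝ))
  have hden : Tendsto (fun n : ℕ => ∑ k ∈ Finset.Icc ⌊Real.sqrt (s * n)⌋₊ n, pW n k)
      atTop (𝓝 (Real.exp (-s))) := by
    have h1 : (∫ x in Set.Ioi s, Real.exp (-x) * (BoundedContinuousFunction.const ℝ (1:ℝ)) x)
        = Real.exp (-s) := by
      simp only [BoundedContinuousFunction.const_apply', mul_one]
      exact integral_exp_neg_Ioi s
    rw [h1] at hden0
    apply hden0.congr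
    intro n
    simp
  have hq := hnum.div hden (Real.exp_pos (-s)).ne'
  have hval : (∫ x in Set.Ioi s, Real.exp (-x) * f x) / Real.exp (-s)
      = ∫ x, f (s + x) ∂(expMeasure 1) := by
    rw [Stmt13Aux.expMeasure_integral s f]
    rw [mul_comm, mul_div_assoc, div_self (Real.exp_pos (-s)).ne', mul_one]
  rw [← hval]
  exact hq
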